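/- Fine's formula: for positive integers n and k, the sum of the multinomial coefficients C(k; k_1,...,k_n) = k!/(k_1!···k_n!) over all tuples (k_1,...,k_n) of nonnegative integers satisfying k_1 + k_2 + ··· + k_n = k and k_1 + 2k_2 + ··· + n·k_n = n equals the binomial coefficient C(n−1, k−1). -/

import Mathlib

open PowerSeries Finset

-- the analytic side
lemma fine_coeff (n k : ℕ) (hn : 0 < n) (hk : 0 < k) :
    (PowerSeries.coeff (R := ℤ) n) ((∑ i : Fin n, (PowerSeries.X : PowerSeries ℤ) ^ (i.1 + 1)) ^ k)
      = ((n - 1).choose (k - 1) : ℤ) := by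
  have htr : trunc (n+1) (∑ i : Fin n, (PowerSeries.X : PowerSeries ℤ) ^ (i.1 + 1))
      = trunc (n+1) (PowerSeries.X * PowerSeries.mk 1) := by
    ext m
    simp only [coeff_trunc]
    split_ifs with h
    · rw [map_sum]
      rcases Nat.eq_zero_or_pos m with rfl | hm
      · simp [coeff_X_pow]
      · have : m = (m - 1) + 1 := by omega
        rw [this, coeff_succ_X_mul]
        simp only [coeff_X_pow, coeff_mk, Pi.one_apply]
        rw [Finset.sum_eq_single (⟨m - 1, by omega⟩ : Fin n)]
        · simp
        · intro b _ hb
          rw [if_neg]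
          intro hc
          apply hb
          simp only [Fin.ext_iff, Fin.val_mk]
          omega
        · simp
    · rfl
  have hco : (PowerSeries.coeff (R := ℤ) n) ((∑ i : Fin n, (PowerSeries.X : PowerSeries ℤ) ^ (i.1 + 1)) ^ k)
      = (PowerSeries.coeff (R := ℤ) n) ((PowerSeries.X * PowerSeries.mk 1) ^ k) := by
    have h1 := trunc_trunc_pow (∑ i : Fin n, (PowerSeries.X : PowerSeries ℤ) ^ (i.1 + 1)) (n+1) k
    have h2 := trunc_trunc_pow (PowerSeries.X * PowerSeries.mk 1 : PowerSeries ℤ) (n+1) k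
    rw [htr] at h1
    have h3 : trunc (n+1) ((∑ i : Fin n, (PowerSeries.X : PowerSeries ℤ) ^ (i.1 + 1)) ^ k)
        = trunc (n+1) ((PowerSeries.X * PowerSeries.mk 1) ^ k) := by rw [← h1, ← h2]
    have := congrArg (fun p => Polynomial.coeff p n) h3
    simpa [coeff_trunc] using this
  rw [hco, mul_pow]
  rcases le_or_gt k n with hkn | hkn
  · have hnk : n = (n - k) + k := by omega
    rw [hnk, coeff_X_pow_mul]
    have hk1 : k = (k - 1) + 1 := by omega
    rw [hk1, mk_one_pow_eq_mk_choose_add, coeff_mk]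
    congr 2
    omega
  · have : (PowerSeries.coeff (R := ℤ) n) (PowerSeries.X ^ k * PowerSeries.mk 1 ^ k) = 0 := by
      rw [PowerSeries.coeff_mul]
      apply Finset.sum_eq_zero
      intro p hp
      rw [coeff_X_pow, if_neg, zero_mul]
      intro h
      have := Finset.HasAntidiagonal.mem_antidiagonal.mp hp
      omega
    rw [this, Nat.choose_eq_zero_of_lt (by omega)]
    simp

theorem fine_formula (n k : ℕ) (hn : 0 < n) (hk : 0 < k) :
    ∑ f ∈ (Fintype.piFinset fun _ : Fin n => Finset.range (n + 1)).filter
        (fun f => (∑ i, f i) = k ∧ (∑ i : Fin n, (i.1 + 1) * f i) = n),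
      k.factorial / ∏ i, (f i).factorial
      = (n - 1).choose (k - 1) := by
  have key := fine_coeff n k hn hk
  rw [Finset.sum_pow_eq_sum_piAntidiag] at key
  rw [map_sum] at key
  -- simplify each term
  have hterm : ∀ g ∈ Finset.piAntidiag (Finset.univ : Finset (Fin n)) k,
      (PowerSeries.coeff (R := ℤ) n) ((Nat.multinomial Finset.univ g : PowerSeries ℤ) *
        ∏ i : Fin n, ((PowerSeries.X : PowerSeries ℤ) ^ (i.1 + 1)) ^ g i)
      = if (∑ i : Fin n, (i.1 + 1) * g i) = n then (Nat.multinomial Finset.univ g : ℤ) else 0 := by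
    intro g hg
    have hprod : (∏ i : Fin n, ((PowerSeries.X : PowerSeries ℤ) ^ (i.1 + 1)) ^ g i)
        = (PowerSeries.X : PowerSeries ℤ) ^ (∑ i : Fin n, (i.1 + 1) * g i) := by
      simp only [← pow_mul]
      rw [← Finset.prod_pow_eq_pow_sum]
    rw [hprod, ← map_natCast (PowerSeries.C (R := ℤ)) (Nat.multinomial Finset.univ g),
      PowerSeries.coeff_C_mul, coeff_X_pow]
    by_cases h : (∑ i : Fin n, (i.1 + 1) * g i) = n
    · rw [if_pos h, if_pos h.symm, mul_one]
    · rw [if_neg h, if_neg (fun hc => h hc.symm), mul_zero]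
  rw [Finset.sum_congr rfl hterm, Finset.sum_ite, Finset.sum_const_zero, add_zero] at key
  -- identify the index sets
  have hsets : (Finset.piAntidiag (Finset.univ : Finset (Fin n)) k).filter
        (fun g => (∑ i : Fin n, (i.1 + 1) * g i) = n)
      = (Fintype.piFinset fun _ : Fin n => Finset.range (n + 1)).filter
        (fun f => (∑ i, f i) = k ∧ (∑ i : Fin n, (i.1 + 1) * f i) = n) := by
    ext g
    simp only [Finset.mem_filter, Finset.mem_piAntidiag, Fintype.mem_piFinset,
      Finset.mem_range]
    constructor
    · rintro ⟨⟨h1, -⟩, h2⟩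
      refine ⟨?_, h1, h2⟩
      intro i
      have ha : (i.1 + 1) * g i ≤ ∑ j : Fin n, (j.1 + 1) * g j :=
        Finset.single_le_sum (f := fun j : Fin n => (j.1 + 1) * g j)
          (fun _ _ => Nat.zero_le _) (Finset.mem_univ i)
      have hb : g i ≤ (i.1 + 1) * g i := Nat.le_mul_of_pos_left (g i) (Nat.succ_pos i.1)
      exact Nat.lt_succ_of_le (hb.trans (ha.trans_eq h2))
    · rintro ⟨-, h1, h2⟩
      exact ⟨⟨h1, fun i _ => Finset.mem_univ i⟩, h2⟩
  rw [hsets] at key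
  have hval : ∀ g ∈ (Fintype.piFinset fun _ : Fin n => Finset.range (n + 1)).filter
        (fun f => (∑ i, f i) = k ∧ (∑ i : Fin n, (i.1 + 1) * f i) = n),
      Nat.multinomial Finset.univ g = k.factorial / ∏ i, (g i).factorial := by
    intro g hg
    obtain ⟨-, h1, -⟩ := Finset.mem_filter.mp hg
    rw [Nat.multinomial, h1]
  calc ∑ f ∈ (Fintype.piFinset fun _ : Fin n => Finset.range (n + 1)).filter
        (fun f => (∑ i, f i) = k ∧ (∑ i : Fin n, (i.1 + 1) * f i) = n),
      k.factorial / ∏ i, (f i).factorial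
      = ∑ f ∈ (Fintype.piFinset fun _ : Fin n => Finset.range (n + 1)).filter
        (fun f => (∑ i, f i) = k ∧ (∑ i : Fin n, (i.1 + 1) * f i) = n),
      Nat.multinomial Finset.univ f := (Finset.sum_congr rfl hval).symm
    _ = (n - 1).choose (k - 1) := by exact_mod_cast key
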